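/- For every real c > 0 there exists a real C > 0 such that the following holds for all reals L ≥ 3 and P ≥ 3. Let I(P) denote the set of primes p ∈ [P,2P] with p > 3 and p not dividing Δ_E. Suppose that for all distinct primes ℓ₁, ℓ₂ ∈ [L,2L] one has | Σ_{p ∈ I(P)} (D_p/(ℓ₁ℓ₂)) − (π(2P) − π(P))·∏_{i=1}^{2} (−1/ℓᵢ)·(ℓᵢ² − 1)^{−1} | ≤ c·ℓ₁³·ℓ₂³·P^{1/2}·log P. Then Σ_{p ∈ I(P)} ( Σ_{ℓ} (D_p/ℓ) )² ≤ C·( L·P/(log L · log P) + L⁸·P^{1/2}·(log P)/(log L)² ), where the inner sum ranges over all odd primes ℓ ∈ [L,2L] with ℓ ≠ p. -/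

import Mathlib

open scoped Classical

noncomputable section

/-- Number of 𝔽_p-rational points of the reduction mod `p` of `W`, including the
point at infinity. -/
def Np (W : WeierstrassCurve ℤ) (p : ℕ) : ℕ :=
  1 + Nat.card {xy : ZMod p × ZMod p //
    (W.map (Int.castRingHom (ZMod p))).toAffine.Equation xy.1 xy.2}

/-- Trace of Frobenius `t_p = p + 1 - N_p`. -/
def tp (W : WeierstrassCurve ℤ) (p : ℕ) : ℤ := (p : ℤ) + 1 - Np W p

/-- Frobenius discriminant `D_p = t_p ^ 2 - 4 p`. -/
def Dp (W : WeierstrassCurve ℤ) (p : ℕ) : ℤ := tp W p ^ 2 - 4 * p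

/-- `ℓ` is an Elkies prime for `E_p`: an odd prime `ℓ ≠ p` such that `D_p` is
congruent to a square modulo `ℓ` (0 counted as a square). -/
def IsElkies (W : WeierstrassCurve ℤ) (p ℓ : ℕ) : Prop :=
  ℓ.Prime ∧ Odd ℓ ∧ ℓ ≠ p ∧ IsSquare ((Dp W p : ZMod ℓ))

/-- `ℓ` is an Atkin prime for `E_p`. -/
def IsAtkin (W : WeierstrassCurve ℤ) (p ℓ : ℕ) : Prop :=
  ℓ.Prime ∧ Odd ℓ ∧ ℓ ≠ p ∧ ¬ IsSquare ((Dp W p : ZMod ℓ))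

/-- `R_e(p; L)`: the number of Elkies primes in `[L, 2L]`. -/
def Re (W : WeierstrassCurve ℤ) (L : ℝ) (p : ℕ) : ℕ :=
  {ℓ : ℕ | L ≤ (ℓ : ℝ) ∧ (ℓ : ℝ) ≤ 2 * L ∧ IsElkies W p ℓ}.ncard

/-- `R_a(p; L)`: the number of Atkin primes in `[L, 2L]`. -/
def Ra (W : WeierstrassCurve ℤ) (L : ℝ) (p : ℕ) : ℕ :=
  {ℓ : ℕ | L ≤ (ℓ : ℝ) ∧ (ℓ : ℝ) ≤ 2 * L ∧ IsAtkin W p ℓ}.ncard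

/-- The prime counting function `π(z)` at a real argument. -/
def primePi (z : ℝ) : ℕ := {q : ℕ | q.Prime ∧ (q : ℝ) ≤ z}.ncard

/-- `ω_L(d)`: the number of primes `ℓ ∈ [L, 2L]` dividing `d`. -/
def omegaL (L : ℝ) (d : ℤ) : ℕ :=
  {ℓ : ℕ | ℓ.Prime ∧ L ≤ (ℓ : ℝ) ∧ (ℓ : ℝ) ≤ 2 * L ∧ (ℓ : ℤ) ∣ d}.ncard

/-- The finset of odd primes `ℓ ∈ [L, 2L]` with `ℓ ≠ p`. -/
def oddPrimesBetween (L : ℝ) (p : ℕ) : Finset ℕ :=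
  (Finset.range (⌊2 * L⌋₊ + 1)).filter
    (fun ℓ => ℓ.Prime ∧ Odd ℓ ∧ ℓ ≠ p ∧ L ≤ (ℓ : ℝ) ∧ (ℓ : ℝ) ≤ 2 * L)

/-- The finset `I(P)` of primes `p ∈ [P, 2P]` with `p > 3` not dividing the
discriminant of `W`. -/
def goodPrimes (W : WeierstrassCurve ℤ) (P : ℝ) : Finset ℕ :=
  (Finset.range (⌊2 * P⌋₊ + 1)).filter
    (fun p => p.Prime ∧ 3 < p ∧ ¬ ((p : ℤ) ∣ W.Δ) ∧ P ≤ (p : ℝ) ∧ (p : ℝ) ≤ 2 * P)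

lemma jac_abs (a : ℤ) (b : ℕ) : |(jacobiSym a b : ℝ)| ≤ 1 := by
  rcases jacobiSym.trichotomy a b with h | h | h <;> rw [h] <;> norm_num

lemma cheb_aux {x : ℝ} (hx : 3 ≤ x) (S : Finset ℕ)
    (hS : ∀ q ∈ S, q.Prime ∧ x ≤ (q : ℝ) ∧ (q : ℝ) ≤ 2 * x) :
    (S.card : ℝ) * Real.log x ≤ 6 * x := by
  have hx0 : (0:ℝ) < x := by linarith
  have h1 : x ^ S.card ≤ ∏ q ∈ S, (q : ℝ) := by
    rw [← Finset.prod_const]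
    exact Finset.prod_le_prod (fun q _ => le_of_lt hx0) (fun q hq => (hS q hq).2.1)
  have h2 : (∏ q ∈ S, q) ≤ primorial ⌊2 * x⌋₊ := by
    apply Finset.prod_le_prod_of_subset_of_one_le'
    · intro q hq
      obtain ⟨hp, _, hq2⟩ := hS q hq
      simp only [Finset.mem_filter, Finset.mem_range, Nat.lt_succ_iff]
      exact ⟨Nat.le_floor hq2, hp⟩
    · intro i hi _
      exact (Finset.mem_filter.mp hi).2.pos
  have h3 := primorial_le_4_pow ⌊2 * x⌋₊
  have h4 : x ^ S.card ≤ (4:ℝ) ^ ⌊2 * x⌋₊ := by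
    calc x ^ S.card ≤ ∏ q ∈ S, (q : ℝ) := h1
    _ = ((∏ q ∈ S, q : ℕ) : ℝ) := by rw [Nat.cast_prod]
    _ ≤ ((4 ^ ⌊2 * x⌋₊ : ℕ) : ℝ) := Nat.cast_le.mpr (h2.trans h3)
    _ = (4:ℝ) ^ ⌊2 * x⌋₊ := by push_cast; ring
  have h5 : Real.log (x ^ S.card) ≤ Real.log ((4:ℝ) ^ ⌊2 * x⌋₊) :=
    Real.log_le_log (pow_pos hx0 _) h4
  rw [Real.log_pow, Real.log_pow] at h5
  have h6 : (⌊2 * x⌋₊ : ℝ) ≤ 2 * x := Nat.floor_le (by linarith)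
  have h7 : Real.log 4 ≤ 3 := by
    have := Real.log_le_sub_one_of_pos (show (0:ℝ) < 4 by norm_num); linarith
  have hlog4 : 0 ≤ Real.log 4 := Real.log_nonneg (by norm_num)
  have hn0 : (0:ℝ) ≤ ⌊2 * x⌋₊ := Nat.cast_nonneg _
  calc (S.card : ℝ) * Real.log x ≤ (⌊2 * x⌋₊ : ℝ) * Real.log 4 := h5
  _ ≤ (2 * x) * 3 := by nlinarith
  _ = 6 * x := by ring

def primesUpTo (z : ℝ) : Finset ℕ :=
  (Finset.range (⌊z⌋₊ + 1)).filter (fun q => q.Prime ∧ (q : ℝ) ≤ z)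

lemma mem_primesUpTo {z : ℝ} {q : ℕ} : q ∈ primesUpTo z ↔ q.Prime ∧ (q : ℝ) ≤ z := by
  simp only [primesUpTo, Finset.mem_filter, Finset.mem_range, Nat.lt_succ_iff]
  constructor
  · rintro ⟨_, hp, hq⟩; exact ⟨hp, hq⟩
  · rintro ⟨hp, hq⟩
    refine ⟨Nat.le_floor ?_, hp, hq⟩
    exact hq
lemma primePi_eq (z : ℝ) : primePi z = (primesUpTo z).card := by
  have h : {q : ℕ | q.Prime ∧ (q : ℝ) ≤ z} = ↑(primesUpTo z) := by
    ext q
    rw [Finset.mem_coe, mem_primesUpTo, Set.mem_setOf_eq]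
  rw [primePi, h, Set.ncard_coe_finset]

/-- auxiliary summand -/
def gAux (W : WeierstrassCurve ℤ) (p ℓ : ℕ) : ℝ :=
  if ℓ ≠ p then (jacobiSym (Dp W p) ℓ : ℝ) else 0

set_option maxHeartbeats 1000000 in
theorem char_sum_second_moment (W : WeierstrassCurve ℤ) (hΔ : W.Δ ≠ 0)
    (c : ℝ) (hc : 0 < c) :
    ∃ C : ℝ, 0 < C ∧ ∀ L P : ℝ, 3 ≤ L → 3 ≤ P →
      (∀ ℓ₁ ℓ₂ : ℕ, ℓ₁.Prime → ℓ₂.Prime → ℓ₁ ≠ ℓ₂ →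
        L ≤ (ℓ₁ : ℝ) → (ℓ₁ : ℝ) ≤ 2 * L → L ≤ (ℓ₂ : ℝ) → (ℓ₂ : ℝ) ≤ 2 * L →
        |(∑ p ∈ goodPrimes W P, (jacobiSym (Dp W p) (ℓ₁ * ℓ₂) : ℝ)) -
          ((primePi (2 * P) : ℝ) - primePi P) *
            ((if ℓ₁ % 4 = 1 then (1 : ℝ) else -1) / ((ℓ₁ : ℝ) ^ 2 - 1) *
             ((if ℓ₂ % 4 = 1 then (1 : ℝ) else -1) / ((ℓ₂ : ℝ) ^ 2 - 1)))| ≤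
          c * (ℓ₁ : ℝ) ^ 3 * (ℓ₂ : ℝ) ^ 3 * Real.sqrt P * Real.log P) →
      ∑ p ∈ goodPrimes W P,
          (∑ ℓ ∈ oddPrimesBetween L p, (jacobiSym (Dp W p) ℓ : ℝ)) ^ 2 ≤
        C * (L * P / (Real.log L * Real.log P) +
          L ^ 8 * Real.sqrt P * Real.log P / (Real.log L) ^ 2) := by
  refine ⟨2304 * c + 1000, by linarith, ?_⟩
  intro L P hL hP hyp
  have hL0 : (0:ℝ) < L := by linarith
  have hP0 : (0:ℝ) < P := by linarith
  have hexp3 : Real.exp 1 < 3 := by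
    have := Real.exp_one_lt_d9; linarith
  have hlogL : 1 ≤ Real.log L := by
    rw [← Real.log_exp 1]
    exact Real.log_le_log (Real.exp_pos 1) (by linarith)
  have hlogP : 1 ≤ Real.log P := by
    rw [← Real.log_exp 1]
    exact Real.log_le_log (Real.exp_pos 1) (by linarith)
  have hlogL0 : (0:ℝ) < Real.log L := by linarith
  have hlogP0 : (0:ℝ) < Real.log P := by linarith
  have hsq : 1 ≤ Real.sqrt P := by
    rw [show (1:ℝ) = Real.sqrt 1 from Real.sqrt_one.symm]
    exact Real.sqrt_le_sqrt (by linarith)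
  set I := goodPrimes W P with hI
  set B := oddPrimesBetween L 0 with hB
  set x := L / Real.log L with hx
  set y := P / Real.log P with hy
  set z := Real.sqrt P * Real.log P with hzdef
  have hx0 : (0:ℝ) < x := div_pos hL0 hlogL0
  have hy0 : (0:ℝ) < y := div_pos hP0 hlogP0
  have hz1 : (1:ℝ) ≤ z := by
    rw [hzdef]
    calc (1:ℝ) = 1 * 1 := by norm_num
    _ ≤ Real.sqrt P * Real.log P :=
        mul_le_mul hsq hlogP (by norm_num) (Real.sqrt_nonneg P)
  have hxL : x ≤ L := div_le_self hL0.le hlogL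
  -- membership facts
  have hBmem : ∀ ℓ ∈ B, ℓ.Prime ∧ L ≤ (ℓ:ℝ) ∧ (ℓ:ℝ) ≤ 2 * L := by
    intro ℓ hℓ
    rw [hB, oddPrimesBetween, Finset.mem_filter] at hℓ
    exact ⟨hℓ.2.1, hℓ.2.2.2.2.1, hℓ.2.2.2.2.2⟩
  have hImem : ∀ p ∈ I, p.Prime ∧ P ≤ (p:ℝ) ∧ (p:ℝ) ≤ 2 * P := by
    intro p hp
    rw [hI, goodPrimes, Finset.mem_filter] at hp
    exact ⟨hp.2.1, hp.2.2.2.2.1, hp.2.2.2.2.2⟩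
  -- Chebyshev bounds
  have hB6 : (B.card : ℝ) ≤ 6 * x := by
    have h := cheb_aux hL B hBmem
    calc (B.card : ℝ) ≤ 6 * L / Real.log L := (le_div_iff₀ hlogL0).mpr h
    _ = 6 * x := mul_div_assoc 6 L _
  have hI6 : (I.card : ℝ) ≤ 6 * y := by
    have h := cheb_aux hP I hImem
    calc (I.card : ℝ) ≤ 6 * P / Real.log P := (le_div_iff₀ hlogP0).mpr h
    _ = 6 * y := mul_div_assoc 6 P _
  -- primePi bounds
  have hFP := primePi_eq P
  have hF2P := primePi_eq (2 * P)
  have hd0 : (primePi P : ℝ) ≤ primePi (2 * P) := by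
    rw [hFP, hF2P]
    have hsub : primesUpTo P ⊆ primesUpTo (2 * P) := by
      intro q hq
      rw [mem_primesUpTo] at hq ⊢
      exact ⟨hq.1, by linarith [hq.2]⟩
    exact_mod_cast Finset.card_le_card hsub
  have hsplit : (primePi (2 * P) : ℝ) - primePi P ≤ 6 * y := by
    set G := (primesUpTo (2 * P)).filter (fun q : ℕ => P < (q : ℝ)) with hG
    have hsub : primesUpTo (2 * P) ⊆ primesUpTo P ∪ G := by
      intro q hq
      by_cases h : (q : ℝ) ≤ P
      · apply Finset.mem_union_left
        rw [mem_primesUpTo] at hq ⊢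
        exact ⟨hq.1, h⟩
      · exact Finset.mem_union_right _ (Finset.mem_filter.mpr ⟨hq, lt_of_not_ge h⟩)
    have hcard : ((primesUpTo (2 * P)).card : ℝ) ≤ (primesUpTo P).card + G.card := by
      have := (Finset.card_le_card hsub).trans (Finset.card_union_le (primesUpTo P) G)
      exact_mod_cast this
    have hGmem : ∀ q ∈ G, q.Prime ∧ P ≤ (q : ℝ) ∧ (q : ℝ) ≤ 2 * P := by
      intro q hq
      have h1 := Finset.mem_filter.mp hq
      have h2 := mem_primesUpTo.mp h1.1
      exact ⟨h2.1, h1.2.le, h2.2⟩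
    have hG6 : (G.card : ℝ) ≤ 6 * y := by
      have h := cheb_aux hP G hGmem
      calc (G.card : ℝ) ≤ 6 * P / Real.log P := (le_div_iff₀ hlogP0).mpr h
      _ = 6 * y := mul_div_assoc 6 P _
    rw [hFP, hF2P]
    linarith
  -- the per-pair off-diagonal bound
  have hU0 : (0:ℝ) ≤ 24 * y / L ^ 4 + 64 * c * L ^ 6 * z + 4 := by positivity
  have hoff : ∀ ℓ₁ ∈ B, ∀ ℓ₂ ∈ B, ℓ₁ ≠ ℓ₂ →
      (∑ p ∈ I, gAux W p ℓ₁ * gAux W p ℓ₂) ≤ 24 * y / L ^ 4 + 64 * c * L ^ 6 * z + 4 := by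
    intro ℓ₁ h₁ ℓ₂ h₂ hne
    obtain ⟨hp₁, hL₁, hU₁⟩ := hBmem ℓ₁ h₁
    obtain ⟨hp₂, hL₂, hU₂⟩ := hBmem ℓ₂ h₂
    have h3₁ : (3:ℝ) ≤ ℓ₁ := le_trans hL hL₁
    have h3₂ : (3:ℝ) ≤ ℓ₂ := le_trans hL hL₂
    have key := hyp ℓ₁ ℓ₂ hp₁ hp₂ hne hL₁ hU₁ hL₂ hU₂
    have hm₁ : |(if ℓ₁ % 4 = 1 then (1:ℝ) else -1) / ((ℓ₁:ℝ) ^ 2 - 1)| ≤ 2 / L ^ 2 := by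
      have h9 : (3:ℝ) * 3 ≤ (ℓ₁:ℝ) * ℓ₁ := mul_le_mul h3₁ h3₁ (by norm_num) (by linarith)
      have hq1 : L * L ≤ (ℓ₁:ℝ) * ℓ₁ := mul_le_mul hL₁ hL₁ hL0.le (by linarith)
      have hden : (0:ℝ) < (ℓ₁:ℝ) ^ 2 - 1 := by rw [pow_two]; linarith
      rw [abs_div, abs_of_pos hden,
        show |(if ℓ₁ % 4 = 1 then (1:ℝ) else -1)| = 1 by split_ifs <;> norm_num,
        div_le_div_iff₀ hden (by positivity)]
      simp only [pow_two]
      linarith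
    have hm₂ : |(if ℓ₂ % 4 = 1 then (1:ℝ) else -1) / ((ℓ₂:ℝ) ^ 2 - 1)| ≤ 2 / L ^ 2 := by
      have h9 : (3:ℝ) * 3 ≤ (ℓ₂:ℝ) * ℓ₂ := mul_le_mul h3₂ h3₂ (by norm_num) (by linarith)
      have hq1 : L * L ≤ (ℓ₂:ℝ) * ℓ₂ := mul_le_mul hL₂ hL₂ hL0.le (by linarith)
      have hden : (0:ℝ) < (ℓ₂:ℝ) ^ 2 - 1 := by rw [pow_two]; linarith
      rw [abs_div, abs_of_pos hden,
        show |(if ℓ₂ % 4 = 1 then (1:ℝ) else -1)| = 1 by split_ifs <;> norm_num,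
        div_le_div_iff₀ hden (by positivity)]
      simp only [pow_two]
      linarith
    have hMT : |((primePi (2 * P) : ℝ) - primePi P) *
        ((if ℓ₁ % 4 = 1 then (1:ℝ) else -1) / ((ℓ₁:ℝ) ^ 2 - 1) *
          ((if ℓ₂ % 4 = 1 then (1:ℝ) else -1) / ((ℓ₂:ℝ) ^ 2 - 1)))| ≤ 24 * y / L ^ 4 := by
      rw [abs_mul, abs_mul]
      have h1 : |(primePi (2 * P) : ℝ) - primePi P| ≤ 6 * y := by
        rw [abs_of_nonneg (by linarith)]; exact hsplit
      calc |(primePi (2 * P) : ℝ) - primePi P| *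
            (|(if ℓ₁ % 4 = 1 then (1:ℝ) else -1) / ((ℓ₁:ℝ) ^ 2 - 1)| *
             |(if ℓ₂ % 4 = 1 then (1:ℝ) else -1) / ((ℓ₂:ℝ) ^ 2 - 1)|)
          ≤ (6 * y) * ((2 / L ^ 2) * (2 / L ^ 2)) := by
            apply mul_le_mul h1 (mul_le_mul hm₁ hm₂ (abs_nonneg _) (by positivity))
              (by positivity) (by linarith)
      _ = 24 * y / L ^ 4 := by ring
    have hE : c * (ℓ₁:ℝ) ^ 3 * (ℓ₂:ℝ) ^ 3 * Real.sqrt P * Real.log P ≤ 64 * c * L ^ 6 * z := by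
      have e1 : (ℓ₁:ℝ) ^ 3 ≤ 8 * L ^ 3 := by
        calc (ℓ₁:ℝ) ^ 3 ≤ (2 * L) ^ 3 := pow_le_pow_left₀ (by positivity) hU₁ 3
        _ = 8 * L ^ 3 := by ring
      have e2 : (ℓ₂:ℝ) ^ 3 ≤ 8 * L ^ 3 := by
        calc (ℓ₂:ℝ) ^ 3 ≤ (2 * L) ^ 3 := pow_le_pow_left₀ (by positivity) hU₂ 3
        _ = 8 * L ^ 3 := by ring
      calc c * (ℓ₁:ℝ) ^ 3 * (ℓ₂:ℝ) ^ 3 * Real.sqrt P * Real.log P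
          = c * ((ℓ₁:ℝ) ^ 3 * (ℓ₂:ℝ) ^ 3) * z := by rw [hzdef]; ring
      _ ≤ c * (8 * L ^ 3 * (8 * L ^ 3)) * z := by
          have hz0 : (0:ℝ) ≤ z := by linarith
          have h64 : (0:ℝ) ≤ (ℓ₂:ℝ) ^ 3 := by positivity
          have hprod : (ℓ₁:ℝ) ^ 3 * (ℓ₂:ℝ) ^ 3 ≤ 8 * L ^ 3 * (8 * L ^ 3) :=
            mul_le_mul e1 e2 h64 (by positivity)
          exact mul_le_mul_of_nonneg_right
            (mul_le_mul_of_nonneg_left hprod hc.le) hz0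
      _ = 64 * c * L ^ 6 * z := by ring
    have hsum1 : (∑ p ∈ I, (jacobiSym (Dp W p) (ℓ₁ * ℓ₂) : ℝ)) ≤
        24 * y / L ^ 4 + 64 * c * L ^ 6 * z := by
      have h1 := (abs_le.mp key).2
      have h2 := le_abs_self (((primePi (2 * P) : ℝ) - primePi P) *
        ((if ℓ₁ % 4 = 1 then (1:ℝ) else -1) / ((ℓ₁:ℝ) ^ 2 - 1) *
          ((if ℓ₂ % 4 = 1 then (1:ℝ) else -1) / ((ℓ₂:ℝ) ^ 2 - 1))))
      linarith
    have hptwise : ∀ p ∈ I, gAux W p ℓ₁ * gAux W p ℓ₂ ≤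
        (jacobiSym (Dp W p) (ℓ₁ * ℓ₂) : ℝ) +
          ((if p = ℓ₁ then (2:ℝ) else 0) + (if p = ℓ₂ then (2:ℝ) else 0)) := by
      intro p _
      have hj := abs_le.mp (jac_abs (Dp W p) (ℓ₁ * ℓ₂))
      by_cases e1 : ℓ₁ = p
      · subst e1
        have hg : gAux W ℓ₁ ℓ₁ = 0 := by simp [gAux]
        rw [hg, zero_mul, if_pos rfl]
        have h2 : (0:ℝ) ≤ if ℓ₁ = ℓ₂ then (2:ℝ) else 0 := by positivity
        linarith [hj.1]
      · by_cases e2 : ℓ₂ = p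
        · subst e2
          have hg : gAux W ℓ₂ ℓ₂ = 0 := by simp [gAux]
          rw [hg, mul_zero, if_pos rfl]
          have h2 : (0:ℝ) ≤ if ℓ₂ = ℓ₁ then (2:ℝ) else 0 := by positivity
          linarith [hj.1]
        · have hg1 : gAux W p ℓ₁ = (jacobiSym (Dp W p) ℓ₁ : ℝ) := if_pos e1
          have hg2 : gAux W p ℓ₂ = (jacobiSym (Dp W p) ℓ₂ : ℝ) := if_pos e2
          rw [hg1, hg2,
            jacobiSym.mul_right' (Dp W p) hp₁.ne_zero hp₂.ne_zero, Int.cast_mul]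
          have i1 : (0:ℝ) ≤ if p = ℓ₁ then (2:ℝ) else 0 := by positivity
          have i2 : (0:ℝ) ≤ if p = ℓ₂ then (2:ℝ) else 0 := by positivity
          linarith
    calc (∑ p ∈ I, gAux W p ℓ₁ * gAux W p ℓ₂)
        ≤ ∑ p ∈ I, ((jacobiSym (Dp W p) (ℓ₁ * ℓ₂) : ℝ) +
            ((if p = ℓ₁ then (2:ℝ) else 0) + (if p = ℓ₂ then (2:ℝ) else 0))) :=
          Finset.sum_le_sum hptwise
    _ = (∑ p ∈ I, (jacobiSym (Dp W p) (ℓ₁ * ℓ₂) : ℝ)) +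
          ((∑ p ∈ I, if p = ℓ₁ then (2:ℝ) else 0) +
           (∑ p ∈ I, if p = ℓ₂ then (2:ℝ) else 0)) := by
        rw [Finset.sum_add_distrib, Finset.sum_add_distrib]
    _ ≤ 24 * y / L ^ 4 + 64 * c * L ^ 6 * z + 4 := by
        have i1 : (∑ p ∈ I, if p = ℓ₁ then (2:ℝ) else 0) ≤ 2 := by
          rw [Finset.sum_ite_eq' I ℓ₁ (fun _ => (2:ℝ))]
          split_ifs <;> norm_num
        have i2 : (∑ p ∈ I, if p = ℓ₂ then (2:ℝ) else 0) ≤ 2 := by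
          rw [Finset.sum_ite_eq' I ℓ₂ (fun _ => (2:ℝ))]
          split_ifs <;> norm_num
        linarith
  -- diagonal bound
  have hdiag : ∀ ℓ ∈ B, (∑ p ∈ I, gAux W p ℓ * gAux W p ℓ) ≤ (I.card : ℝ) := by
    intro ℓ _
    have h1 : ∑ p ∈ I, gAux W p ℓ * gAux W p ℓ ≤ ∑ _p ∈ I, (1:ℝ) := by
      apply Finset.sum_le_sum
      intro p _
      unfold gAux
      split_ifs with h
      · exact abs_le_one_iff_mul_self_le_one.mp (jac_abs (Dp W p) ℓ)
      · norm_num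
    have h2 : (∑ _p ∈ I, (1:ℝ)) = (I.card : ℝ) := by
      rw [Finset.sum_const, nsmul_eq_mul, mul_one]
    linarith
  -- rewrite the main sum
  have hA : ∀ p : ℕ, oddPrimesBetween L p = B.filter (fun ℓ => ℓ ≠ p) := by
    intro p
    ext ℓ
    rw [hB]
    simp only [oddPrimesBetween, Finset.mem_filter, Finset.mem_range]
    constructor
    · rintro ⟨h1, h2, h3, h4, h5, h6⟩
      exact ⟨⟨h1, h2, h3, h2.ne_zero, h5, h6⟩, h4⟩
    · rintro ⟨⟨h1, h2, h3, _, h5, h6⟩, h4⟩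
      exact ⟨h1, h2, h3, h4, h5, h6⟩
  have hrw : ∑ p ∈ I,
      (∑ ℓ ∈ oddPrimesBetween L p, (jacobiSym (Dp W p) ℓ : ℝ)) ^ 2 =
      ∑ ℓ₁ ∈ B, ∑ ℓ₂ ∈ B, ∑ p ∈ I, gAux W p ℓ₁ * gAux W p ℓ₂ := by
    calc ∑ p ∈ I, (∑ ℓ ∈ oddPrimesBetween L p, (jacobiSym (Dp W p) ℓ : ℝ)) ^ 2
        = ∑ p ∈ I, ∑ ℓ₁ ∈ B, ∑ ℓ₂ ∈ B, gAux W p ℓ₁ * gAux W p ℓ₂ := by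
          apply Finset.sum_congr rfl
          intro p _
          rw [hA p, Finset.sum_filter, pow_two, Finset.sum_mul_sum]
          simp only [gAux]
    _ = ∑ ℓ₁ ∈ B, ∑ p ∈ I, ∑ ℓ₂ ∈ B, gAux W p ℓ₁ * gAux W p ℓ₂ := Finset.sum_comm
    _ = ∑ ℓ₁ ∈ B, ∑ ℓ₂ ∈ B, ∑ p ∈ I, gAux W p ℓ₁ * gAux W p ℓ₂ :=
        Finset.sum_congr rfl (fun _ _ => Finset.sum_comm)
  rw [hrw]
  -- bound the double sum
  have hstep : ∑ ℓ₁ ∈ B, ∑ ℓ₂ ∈ B, ∑ p ∈ I, gAux W p ℓ₁ * gAux W p ℓ₂ ≤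
      (B.card : ℝ) * ((I.card : ℝ) +
        (B.card : ℝ) * (24 * y / L ^ 4 + 64 * c * L ^ 6 * z + 4)) := by
    have hIc0 : (0:ℝ) ≤ (I.card : ℝ) := Nat.cast_nonneg _
    calc ∑ ℓ₁ ∈ B, ∑ ℓ₂ ∈ B, ∑ p ∈ I, gAux W p ℓ₁ * gAux W p ℓ₂
        ≤ ∑ ℓ₁ ∈ B, ((I.card : ℝ) +
            (B.card : ℝ) * (24 * y / L ^ 4 + 64 * c * L ^ 6 * z + 4)) := by
          apply Finset.sum_le_sum
          intro ℓ₁ h₁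
          calc ∑ ℓ₂ ∈ B, ∑ p ∈ I, gAux W p ℓ₁ * gAux W p ℓ₂
              ≤ ∑ ℓ₂ ∈ B, ((if ℓ₁ = ℓ₂ then (I.card : ℝ) else 0) +
                  (24 * y / L ^ 4 + 64 * c * L ^ 6 * z + 4)) := by
                apply Finset.sum_le_sum
                intro ℓ₂ h₂
                by_cases h : ℓ₁ = ℓ₂
                · subst h
                  rw [if_pos rfl]
                  linarith [hdiag ℓ₁ h₁]
                · rw [if_neg h]
                  linarith [hoff ℓ₁ h₁ ℓ₂ h₂ h]
          _ = (if ℓ₁ ∈ B then (I.card : ℝ) else 0) +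
                (B.card : ℝ) * (24 * y / L ^ 4 + 64 * c * L ^ 6 * z + 4) := by
              rw [Finset.sum_add_distrib, Finset.sum_ite_eq B ℓ₁ (fun _ => (I.card : ℝ)),
                Finset.sum_const, nsmul_eq_mul]
          _ ≤ (I.card : ℝ) + (B.card : ℝ) * (24 * y / L ^ 4 + 64 * c * L ^ 6 * z + 4) := by
              rw [if_pos h₁]
    _ = (B.card : ℝ) * ((I.card : ℝ) +
          (B.card : ℝ) * (24 * y / L ^ 4 + 64 * c * L ^ 6 * z + 4)) := by
        rw [Finset.sum_const, nsmul_eq_mul]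
  have hBc0 : (0:ℝ) ≤ (B.card : ℝ) := Nat.cast_nonneg _
  have hIc0 : (0:ℝ) ≤ (I.card : ℝ) := Nat.cast_nonneg _
  have hstep2 : (B.card : ℝ) * ((I.card : ℝ) +
      (B.card : ℝ) * (24 * y / L ^ 4 + 64 * c * L ^ 6 * z + 4)) ≤
      (6 * x) * (6 * y + (6 * x) * (24 * y / L ^ 4 + 64 * c * L ^ 6 * z + 4)) := by
    have h1 : (B.card : ℝ) * (24 * y / L ^ 4 + 64 * c * L ^ 6 * z + 4) ≤
        (6 * x) * (24 * y / L ^ 4 + 64 * c * L ^ 6 * z + 4) :=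
      mul_le_mul_of_nonneg_right hB6 hU0
    have h2 : (I.card : ℝ) + (B.card : ℝ) * (24 * y / L ^ 4 + 64 * c * L ^ 6 * z + 4) ≤
        6 * y + (6 * x) * (24 * y / L ^ 4 + 64 * c * L ^ 6 * z + 4) := by linarith
    apply mul_le_mul hB6 h2 (add_nonneg hIc0 (mul_nonneg hBc0 hU0)) (by positivity)
  -- final numeric estimates
  have hT1 : x * y = L * P / (Real.log L * Real.log P) := by
    rw [hx, hy, div_mul_div_comm]
  have hT2 : x ^ 2 * L ^ 6 * z = L ^ 8 * Real.sqrt P * Real.log P / (Real.log L) ^ 2 := by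
    rw [hx, hzdef, div_pow]; ring
  have hLL4 : L ≤ L ^ 4 := by
    calc L = L ^ 1 := (pow_one L).symm
    _ ≤ L ^ 4 := pow_le_pow_right₀ (by linarith) (by norm_num)
  have hf1 : x ^ 2 * y / L ^ 4 ≤ x * y := by
    rw [div_le_iff₀ (by positivity)]
    have hxL4 : x ≤ L ^ 4 := hxL.trans hLL4
    calc x ^ 2 * y = x * y * x := by ring
    _ ≤ x * y * L ^ 4 := mul_le_mul_of_nonneg_left hxL4 (by positivity)
  have hf2 : x ^ 2 ≤ x ^ 2 * L ^ 6 * z := by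
    have hL6 : (1:ℝ) ≤ L ^ 6 := by
      calc (1:ℝ) = 1 ^ 6 := by norm_num
      _ ≤ L ^ 6 := pow_le_pow_left₀ (by norm_num) (by linarith) 6
    have h1 : (1:ℝ) ≤ L ^ 6 * z := by
      calc (1:ℝ) = 1 * 1 := by norm_num
      _ ≤ L ^ 6 * z := mul_le_mul hL6 hz1 (by norm_num) (by positivity)
    calc x ^ 2 = x ^ 2 * 1 := by ring
    _ ≤ x ^ 2 * (L ^ 6 * z) := mul_le_mul_of_nonneg_left h1 (by positivity)
    _ = x ^ 2 * L ^ 6 * z := by ring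
  have hexpand : (6 * x) * (6 * y + (6 * x) * (24 * y / L ^ 4 + 64 * c * L ^ 6 * z + 4)) =
      36 * (x * y) + 864 * (x ^ 2 * y / L ^ 4) + 2304 * c * (x ^ 2 * L ^ 6 * z) +
        144 * x ^ 2 := by ring
  have hT1nn : (0:ℝ) ≤ x * y := by positivity
  have hT2nn : (0:ℝ) ≤ x ^ 2 * L ^ 6 * z := by positivity
  rw [← hT1, ← hT2]
  have hfin : 36 * (x * y) + 864 * (x ^ 2 * y / L ^ 4) + 2304 * c * (x ^ 2 * L ^ 6 * z) +
      144 * x ^ 2 ≤ (2304 * c + 1000) * (x * y + x ^ 2 * L ^ 6 * z) := by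
    nlinarith [mul_nonneg hc.le hT1nn, mul_nonneg hc.le hT2nn]
  calc ∑ ℓ₁ ∈ B, ∑ ℓ₂ ∈ B, ∑ p ∈ I, gAux W p ℓ₁ * gAux W p ℓ₂
      ≤ (B.card : ℝ) * ((I.card : ℝ) +
          (B.card : ℝ) * (24 * y / L ^ 4 + 64 * c * L ^ 6 * z + 4)) := hstep
  _ ≤ (6 * x) * (6 * y + (6 * x) * (24 * y / L ^ 4 + 64 * c * L ^ 6 * z + 4)) := hstep2
  _ = 36 * (x * y) + 864 * (x ^ 2 * y / L ^ 4) + 2304 * c * (x ^ 2 * L ^ 6 * z) +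
        144 * x ^ 2 := hexpand
  _ ≤ (2304 * c + 1000) * (x * y + x ^ 2 * L ^ 6 * z) := hfin


end
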